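/- Let S, P, Q be pairwise disjoint finite sets and let K_{SP}, K_{PQ} be generalized number lattices on S ⊎ P and P ⊎ Q. Then the matched composition K_{SP} ↔ K_{PQ} := { (f_S, g_Q) : ∃ h_P, (f_S, h_P) ∈ K_{SP} and (h_P, g_Q) ∈ K_{PQ} } is a generalized number lattice on S ⊎ Q. -/

import Mathlib

/-- A generalized number lattice. -/
def IsGenNumLat {M : Type*} [AddCommGroup M] [Module ℚ M] (K : Set M) : Prop :=
  ∃ (n k : ℕ) (b : Fin n → M) (c : Fin k → M),
    K = {x | ∃ (l : Fin n → ℤ) (m : Fin k → ℚ),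
      x = (∑ i, (l i : ℚ) • b i) + ∑ j, m j • c j}

section Aux

variable {M N V Z : Type*} [AddCommGroup M] [Module ℚ M] [AddCommGroup N] [Module ℚ N]
  [AddCommGroup V] [Module ℚ V] [AddCommGroup Z]

/-- Upgrade an additive hom between `ℚ`-vector spaces to a `ℚ`-linear map. -/
def ratify (f : M →+ N) : M →ₗ[ℚ] N where
  toFun := f
  map_add' := f.map_add
  map_smul' := fun q x => map_rat_smul f q x

/-- The `ℤ`-linear map associated to the generators of a generalized number lattice. -/
def sumMap {n k : ℕ} (b : Fin n → M) (c : Fin k → M) :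
    ((Fin n → ℤ) × (Fin k → ℚ)) →ₗ[ℤ] M where
  toFun p := (∑ i, (p.1 i : ℚ) • b i) + ∑ j, p.2 j • c j
  map_add' p q := by
    simp only [Prod.fst_add, Prod.snd_add, Pi.add_apply, Int.cast_add, add_smul,
      Finset.sum_add_distrib]
    abel
  map_smul' z p := by
    show (∑ i, (((z • p).1) i : ℚ) • b i) + ∑ j, ((z • p).2) j • c j
        = z • ((∑ i, (p.1 i : ℚ) • b i) + ∑ j, p.2 j • c j)
    have h1 : ∀ i, (((z • p).1) i : ℚ) • b i = z • ((p.1 i : ℚ) • b i) := fun i => by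
      have e : ((z • p).1) i = z * p.1 i := rfl
      rw [e, Int.cast_mul, mul_smul, Int.cast_smul_eq_zsmul ℚ]
    have h2 : ∀ j, ((z • p).2) j • c j = z • (p.2 j • c j) := fun j => by
      have e : ((z • p).2) j = z • p.2 j := rfl
      rw [e, ← Int.cast_smul_eq_zsmul ℚ z (p.2 j), smul_eq_mul, mul_smul,
        Int.cast_smul_eq_zsmul ℚ]
    simp only [h1, h2]
    rw [smul_add, Finset.smul_sum, Finset.smul_sum]

/-- Core lemma: the image under a `ℤ`-linear map of the kernel of a `ℤ`-linear map
on `Z × V`, with `Z` a Noetherian `ℤ`-module and `V` a finite-dimensional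
`ℚ`-vector space, is a generalized number lattice. -/
theorem core [IsNoetherian ℤ Z] [Module.Finite ℚ V]
    (Φ : (Z × V) →ₗ[ℤ] M) (Θ : (Z × V) →ₗ[ℤ] N) :
    IsGenNumLat (Θ '' (LinearMap.ker Φ : Set (Z × V))) := by
  classical
  -- the projection of the kernel to `Z` is finitely generated
  set π : (Z × V) →ₗ[ℤ] Z := LinearMap.fst ℤ Z V with hπ
  set L : Submodule ℤ Z := Submodule.map π (LinearMap.ker Φ) with hL
  obtain ⟨r, x, hx⟩ := Submodule.fg_iff_exists_fin_generating_family.mp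
    (IsNoetherian.noetherian L)
  have hxmem : ∀ i, ∃ d, d ∈ LinearMap.ker Φ ∧ π d = x i := by
    intro i
    have : x i ∈ L := by
      rw [← hx]; exact Submodule.subset_span (Set.mem_range_self i)
    obtain ⟨d, hd, hd'⟩ := this
    exact ⟨d, hd, hd'⟩
  choose h hker hproj using hxmem
  -- the `ℚ`-part of the kernel
  set ΦQ : V →ₗ[ℚ] M := ratify (Φ.toAddMonoidHom.comp (AddMonoidHom.inr Z V)) with hΦQ
  have hΦQ_apply : ∀ v, ΦQ v = Φ (0, v) := fun v => rfl
  set ΘQ : V →ₗ[ℚ] N := ratify (Θ.toAddMonoidHom.comp (AddMonoidHom.inr Z V)) with hΘQ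
  have hΘQ_apply : ∀ v, ΘQ v = Θ (0, v) := fun v => rfl
  haveI : IsNoetherian ℚ V := inferInstance
  obtain ⟨s, w, hw⟩ := Submodule.fg_iff_exists_fin_generating_family.mp
    (IsNoetherian.noetherian (LinearMap.ker ΦQ))
  refine ⟨r, s, fun i => Θ (h i), fun j => Θ (0, w j), ?_⟩
  ext y
  simp only [Set.mem_image, Set.mem_setOf_eq, SetLike.mem_coe]
  constructor
  · rintro ⟨d, hd, rfl⟩
    have hπd : π d ∈ L := Submodule.mem_map_of_mem hd
    rw [← hx, Submodule.mem_span_range_iff_exists_fun ℤ] at hπd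
    obtain ⟨l, hl⟩ := hπd
    set d' : Z × V := d - ∑ i, l i • h i with hd'def
    have hd'ker : d' ∈ LinearMap.ker Φ :=
      Submodule.sub_mem _ hd (Submodule.sum_mem _ fun i _ => Submodule.smul_mem _ _ (hker i))
    have hπd' : d'.1 = 0 := by
      have : π d' = 0 := by
        rw [hd'def, map_sub, map_sum]
        simp only [map_smul, hproj, hl, sub_self]
      exact this
    have hd'eq : d' = (0, d'.2) := by
      rw [← hπd']
    have hmemW : d'.2 ∈ LinearMap.ker ΦQ := by
      rw [LinearMap.mem_ker, hΦQ_apply, ← hd'eq]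
      exact hd'ker
    rw [← hw, Submodule.mem_span_range_iff_exists_fun ℚ] at hmemW
    obtain ⟨m, hm⟩ := hmemW
    refine ⟨l, m, ?_⟩
    have : Θ d = Θ (∑ i, l i • h i) + Θ d' := by
      rw [hd'def, ← map_add]; congr 1; abel
    rw [this, map_sum]
    congr 1
    · exact Finset.sum_congr rfl fun i _ => by
        rw [map_smul, Int.cast_smul_eq_zsmul ℚ]
    · rw [hd'eq, ← hΘQ_apply, ← hm, map_sum]
      exact Finset.sum_congr rfl fun j _ => by rw [map_smul, hΘQ_apply]
  · rintro ⟨l, m, rfl⟩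
    refine ⟨(∑ i, l i • h i) + (0, ∑ j, m j • w j), ?_, ?_⟩
    · refine Submodule.add_mem _
        (Submodule.sum_mem _ fun i _ => Submodule.smul_mem _ _ (hker i)) ?_
      rw [LinearMap.mem_ker, ← hΦQ_apply, map_sum]
      refine Finset.sum_eq_zero fun j _ => ?_
      rw [map_smul]
      have : ΦQ (w j) = 0 := by
        have : w j ∈ LinearMap.ker ΦQ := by
          rw [← hw]; exact Submodule.subset_span (Set.mem_range_self j)
        exact this
      rw [this, smul_zero]
    · rw [map_add, map_sum]
      congr 1
      · exact Finset.sum_congr rfl fun i _ => by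
          rw [map_smul, Int.cast_smul_eq_zsmul ℚ]
      · rw [← hΘQ_apply, map_sum]
        exact Finset.sum_congr rfl fun j _ => by rw [map_smul, hΘQ_apply]

end Aux

theorem stmt6 {S P Q : Type*}
    (KSP : Set ((S → ℚ) × (P → ℚ))) (KPQ : Set ((P → ℚ) × (Q → ℚ)))
    (h1 : IsGenNumLat KSP) (h2 : IsGenNumLat KPQ) :
    IsGenNumLat {x : (S → ℚ) × (Q → ℚ) |
      ∃ h : P → ℚ, (x.1, h) ∈ KSP ∧ (h, x.2) ∈ KPQ} := by
  classical
  obtain ⟨n1, k1, b1, c1, hK1⟩ := h1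
  obtain ⟨n2, k2, b2, c2, hK2⟩ := h2
  set F1 := sumMap b1 c1 with hF1
  set F2 := sumMap b2 c2 with hF2
  have hK1' : ∀ y : (S → ℚ) × (P → ℚ), y ∈ KSP ↔ ∃ p, F1 p = y := by
    intro y
    rw [hK1]
    constructor
    · rintro ⟨l, m, rfl⟩; exact ⟨(l, m), rfl⟩
    · rintro ⟨⟨l, m⟩, rfl⟩; exact ⟨l, m, rfl⟩
  have hK2' : ∀ y : (P → ℚ) × (Q → ℚ), y ∈ KPQ ↔ ∃ p, F2 p = y := by
    intro y
    rw [hK2]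
    constructor
    · rintro ⟨l, m, rfl⟩; exact ⟨(l, m), rfl⟩
    · rintro ⟨⟨l, m⟩, rfl⟩; exact ⟨l, m, rfl⟩
  -- set up the combined domain
  set Z := (Fin n1 → ℤ) × (Fin n2 → ℤ) with hZ
  set V := (Fin k1 → ℚ) × (Fin k2 → ℚ) with hV
  -- the matching map and the output map
  set g1 : (Z × V) →ₗ[ℤ] (Fin n1 → ℤ) × (Fin k1 → ℚ) :=
    ((LinearMap.fst ℤ (Fin n1 → ℤ) (Fin n2 → ℤ)).comp (LinearMap.fst ℤ Z V)).prod
      ((LinearMap.fst ℤ (Fin k1 → ℚ) (Fin k2 → ℚ)).comp (LinearMap.snd ℤ Z V)) with hg1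
  set g2 : (Z × V) →ₗ[ℤ] (Fin n2 → ℤ) × (Fin k2 → ℚ) :=
    ((LinearMap.snd ℤ (Fin n1 → ℤ) (Fin n2 → ℤ)).comp (LinearMap.fst ℤ Z V)).prod
      ((LinearMap.snd ℤ (Fin k1 → ℚ) (Fin k2 → ℚ)).comp (LinearMap.snd ℤ Z V)) with hg2
  set Φ : (Z × V) →ₗ[ℤ] (P → ℚ) :=
    (LinearMap.snd ℤ (S → ℚ) (P → ℚ)).comp (F1.comp g1)
      - (LinearMap.fst ℤ (P → ℚ) (Q → ℚ)).comp (F2.comp g2) with hΦ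
  set Θ : (Z × V) →ₗ[ℤ] (S → ℚ) × (Q → ℚ) :=
    ((LinearMap.fst ℤ (S → ℚ) (P → ℚ)).comp (F1.comp g1)).prod
      ((LinearMap.snd ℤ (P → ℚ) (Q → ℚ)).comp (F2.comp g2)) with hΘ
  have hΦ_apply : ∀ p : Z × V, Φ p = (F1 (p.1.1, p.2.1)).2 - (F2 (p.1.2, p.2.2)).1 :=
    fun p => rfl
  have hΘ_apply : ∀ p : Z × V, Θ p = ((F1 (p.1.1, p.2.1)).1, (F2 (p.1.2, p.2.2)).2) :=
    fun p => rfl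
  have key : {x : (S → ℚ) × (Q → ℚ) | ∃ h : P → ℚ, (x.1, h) ∈ KSP ∧ (h, x.2) ∈ KPQ}
      = Θ '' (LinearMap.ker Φ : Set (Z × V)) := by
    ext x
    simp only [Set.mem_setOf_eq, Set.mem_image, SetLike.mem_coe, LinearMap.mem_ker]
    constructor
    · rintro ⟨h, hsp, hpq⟩
      obtain ⟨⟨l, m⟩, e1⟩ := (hK1' _).mp hsp
      obtain ⟨⟨l', m'⟩, e2⟩ := (hK2' _).mp hpq
      refine ⟨((l, l'), (m, m')), ?_, ?_⟩
      · rw [hΦ_apply]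
        show (F1 (l, m)).2 - (F2 (l', m')).1 = 0
        rw [e1, e2]
        simp
      · rw [hΘ_apply]
        show ((F1 (l, m)).1, (F2 (l', m')).2) = x
        rw [e1, e2]
    · rintro ⟨d, hd, rfl⟩
      rw [hΘ_apply]
      refine ⟨(F1 (d.1.1, d.2.1)).2, ?_, ?_⟩
      · rw [hK1' _]
        exact ⟨(d.1.1, d.2.1), rfl⟩
      · rw [hK2' _]
        refine ⟨(d.1.2, d.2.2), ?_⟩
        have h0 : (F1 (d.1.1, d.2.1)).2 - (F2 (d.1.2, d.2.2)).1 = 0 := by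
          rw [← hΦ_apply]; exact hd
        have : (F2 (d.1.2, d.2.2)).1 = (F1 (d.1.1, d.2.1)).2 := (sub_eq_zero.mp h0).symm
        exact Prod.ext this rfl
  rw [key]
  exact core Φ Θ
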